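/- For all integers d ≥ 1 and all integers m, n with 0 < m < n, the integer lcm(n+1, m·d)/(m·d) divides ∑_{i=0}^{n−m+1} (−1)^i · C(n+1, i) · C(n+1−i, m) · d^{n−i}, where C(·,·) denotes the binomial coefficient. -/

import Mathlib

private lemma alt_sum_eq (N : ℕ) (d : ℤ) :
    ∑ i ∈ Finset.range (N + 1),
      (-1 : ℤ) ^ i * (Nat.choose N i : ℤ) * d ^ (N - i) = (d - 1) ^ N := by
  rw [← Finset.sum_range_reflect, sub_eq_add_neg, add_pow]
  refine Finset.sum_congr rfl fun i hi => ?_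
  rw [Finset.mem_range] at hi
  have hiN : i ≤ N := by omega
  rw [show N + 1 - 1 - i = N - i by omega, Nat.choose_symm hiN, Nat.sub_sub_self hiN]
  ring

private lemma choose_split {n m i : ℕ} (hm : m ≤ n + 1) (hi : i ≤ n + 1 - m) :
    Nat.choose (n + 1) i * Nat.choose (n + 1 - i) m
      = Nat.choose (n + 1) m * Nat.choose (n + 1 - m) i := by
  have h1 : i ≤ n + 1 := by omega
  have h2 : n + 1 - i ≤ n + 1 := by omega
  have h3 : m ≤ n + 1 - i := by omega
  rw [← Nat.choose_symm h1, Nat.choose_mul (n := n + 1) h3]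
  congr 1
  rw [show n + 1 - i - m = (n + 1 - m) - i by omega, Nat.choose_symm hi]

/-- For all integers `d ≥ 1` and all `m`, `n` with `0 < m < n`, the integer
`lcm (n+1) (m*d) / (m*d)` divides
`∑_{i=0}^{n−m+1} (−1)^i · C(n+1, i) · C(n+1−i, m) · d^{n−i}`. -/
theorem stmt_6 (d m n : ℕ) (hd : 1 ≤ d) (hm : 0 < m) (hmn : m < n) :
    ((Nat.lcm (n + 1) (m * d) / (m * d) : ℕ) : ℤ) ∣
      ∑ i ∈ Finset.range (n - m + 2),
        (-1 : ℤ) ^ i * (Nat.choose (n + 1) i : ℤ) * (Nat.choose (n + 1 - i) m : ℤ)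
          * (d : ℤ) ^ (n - i) := by
  set N := n + 1 - m with hN
  -- Step 1: compute the sum
  have hsum : ∑ i ∈ Finset.range (n - m + 2),
      (-1 : ℤ) ^ i * (Nat.choose (n + 1) i : ℤ) * (Nat.choose (n + 1 - i) m : ℤ)
        * (d : ℤ) ^ (n - i)
      = ((Nat.choose (n + 1) m * d ^ (m - 1) * (d - 1) ^ N : ℕ) : ℤ) := by
    have hrange : n - m + 2 = N + 1 := by omega
    push_cast [hd]
    rw [hrange, ← alt_sum_eq N (d : ℤ), Finset.mul_sum]
    refine Finset.sum_congr rfl fun i hi => ?_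
    rw [Finset.mem_range] at hi
    have hi' : i ≤ N := by omega
    have hcast : (Nat.choose (n + 1) i : ℤ) * (Nat.choose (n + 1 - i) m : ℤ)
        = (Nat.choose (n + 1) m : ℤ) * (Nat.choose N i : ℤ) := by
      rw [← Nat.cast_mul, ← Nat.cast_mul, choose_split (by omega) (by omega)]
    have hpow : (d : ℤ) ^ (n - i) = (d : ℤ) ^ (m - 1) * (d : ℤ) ^ (N - i) := by
      rw [← pow_add]; congr 1; omega
    calc (-1 : ℤ) ^ i * (Nat.choose (n + 1) i : ℤ) * (Nat.choose (n + 1 - i) m : ℤ)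
          * (d : ℤ) ^ (n - i)
        = ((Nat.choose (n + 1) i : ℤ) * (Nat.choose (n + 1 - i) m : ℤ))
            * ((-1 : ℤ) ^ i * (d : ℤ) ^ (n - i)) := by ring
      _ = _ := by rw [hcast, hpow]; ring
  rw [hsum]
  rw [Int.natCast_dvd_natCast]
  -- Step 2: identify the quotient
  set a := n + 1 with ha
  set b := m * d with hb
  have hbpos : 0 < b := Nat.mul_pos hm hd
  have hapos : 0 < a := Nat.succ_pos n
  set g := Nat.gcd a b with hg
  have hgpos : 0 < g := Nat.gcd_pos_of_pos_left _ hapos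
  have hga : g ∣ a := Nat.gcd_dvd_left a b
  have hgb : g ∣ b := Nat.gcd_dvd_right a b
  obtain ⟨a', ha'⟩ := hga
  have hquot : Nat.lcm a b / b = a / g := by
    apply Nat.div_eq_of_eq_mul_left hbpos
    rw [Nat.lcm, ← hg, ha', Nat.mul_assoc, Nat.mul_div_cancel_left _ hgpos,
      Nat.mul_div_cancel_left _ hgpos]
  have hga : g ∣ a := ⟨a', ha'⟩
  rw [hquot]
  -- Step 3: key divisibility b * S = a * T
  set S := Nat.choose (n + 1) m * d ^ (m - 1) * (d - 1) ^ N with hS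
  set T := Nat.choose n (m - 1) * d ^ m * (d - 1) ^ N with hT
  have hkey : b * S = a * T := by
    have hmc : a * Nat.choose n (m - 1) = Nat.choose a m * m := by
      have := Nat.add_one_mul_choose_eq n (m - 1)
      simp only [Nat.succ_eq_add_one, show m - 1 + 1 = m by omega] at this
      rw [ha]; exact this
    have hdm : d ^ m = d * d ^ (m - 1) := by
      rw [← pow_succ']; congr 1; omega
    calc b * S = (Nat.choose a m * m) * (d * d ^ (m - 1)) * (d - 1) ^ N := by
          rw [hS, hb]; ring
      _ = (a * Nat.choose n (m - 1)) * d ^ m * (d - 1) ^ N := by rw [hmc, hdm]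
      _ = a * T := by rw [hT]; ring
  -- Step 4: conclude by coprimality
  have hcop : Nat.Coprime (a / g) (b / g) := Nat.coprime_div_gcd_div_gcd hgpos
  have hdvd : a / g ∣ (b / g) * S := by
    refine ⟨T, ?_⟩
    apply Nat.eq_of_mul_eq_mul_left hgpos
    calc g * (b / g * S) = (g * (b / g)) * S := by ring
      _ = b * S := by rw [Nat.mul_div_cancel' hgb]
      _ = a * T := hkey
      _ = (g * (a / g)) * T := by rw [Nat.mul_div_cancel' hga]
      _ = g * (a / g * T) := by ring
  exact (Nat.Coprime.dvd_of_dvd_mul_left hcop hdvd)
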